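/- Let c : C → X × X be a correspondence over a field k. A closed subset Z ⊆ X is locally c-invariant if and only if G(c, Z) = ∅. -/

import Mathlib

open AlgebraicGeometry CategoryTheory CategoryTheory.Limits TopologicalSpace Opposite

universe u



variable {α β : Type u} [TopologicalSpace α] [TopologicalSpace β]

/-- Every point of a set `F` lies in a maximal irreducible subset of `F`. -/
lemma exists_maximal_irreducible_subset_mem {F : Set α} {p : α} (hp : p ∈ F) :
    ∃ S, p ∈ S ∧ Maximal (fun T : Set α => T ⊆ F ∧ IsIrreducible T) S := by
  obtain ⟨m, hpm, hm⟩ := zorn_subset_nonempty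
      {T : Set α | T ⊆ F ∧ IsPreirreducible T}
      (fun c hcS hchain _hne => by
        refine ⟨⋃₀ c, ⟨Set.sUnion_subset fun s hs => (hcS hs).1, ?_⟩,
          fun s hs => Set.subset_sUnion_of_mem hs⟩
        rintro u v hu hv ⟨y, hy, hyu⟩ ⟨x, hx, hxv⟩
        obtain ⟨p', hpc, hyp⟩ := Set.mem_sUnion.1 hy
        obtain ⟨q, hqc, hxq⟩ := Set.mem_sUnion.1 hx
        rcases hchain.total hpc hqc with hpq | hqp
        · obtain ⟨z, hzq, hz⟩ := (hcS hqc).2 u v hu hv ⟨y, hpq hyp, hyu⟩ ⟨x, hxq, hxv⟩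
          exact ⟨z, Set.mem_sUnion_of_mem hzq hqc, hz⟩
        · obtain ⟨z, hzp, hz⟩ := (hcS hpc).2 u v hu hv ⟨y, hyp, hyu⟩ ⟨x, hqp hxq, hxv⟩
          exact ⟨z, Set.mem_sUnion_of_mem hzp hpc, hz⟩)
      {p} ⟨Set.singleton_subset_iff.2 hp, isPreirreducible_singleton⟩
  refine ⟨m, hpm rfl, ⟨⟨hm.1.1, ⟨⟨p, hpm rfl⟩, hm.1.2⟩⟩, ?_⟩⟩
  intro T hT hmT
  exact hm.2 ⟨hT.1, hT.2.2⟩ hmT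

/-- In a noetherian space, a set has only finitely many maximal irreducible subsets. -/
lemma finite_maximal_irreducible_subsets [NoetherianSpace α] (F : Set α) :
    {S : Set α | Maximal (fun T : Set α => T ⊆ F ∧ IsIrreducible T) S}.Finite := by
  have hcomp : (irreducibleComponents F).Finite :=
    NoetherianSpace.finite_irreducibleComponents
  refine (hcomp.image (fun T => (Subtype.val : F → α) '' T)).subset ?_
  rintro S hS
  have hSF : S ⊆ F := hS.1.1
  have himg : (Subtype.val : F → α) '' (Subtype.val ⁻¹' S) = S := by
    rw [Set.image_preimage_eq_inter_range, Subtype.range_coe]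
    exact Set.inter_eq_left.2 hSF
  refine ⟨Subtype.val ⁻¹' S, ?_, himg⟩
  constructor
  · constructor
    · obtain ⟨x, hx⟩ := hS.1.2.1
      exact ⟨⟨x, hSF hx⟩, hx⟩
    · rintro u v hu hv ⟨a, ha, hau⟩ ⟨b, hb, hbv⟩
      obtain ⟨u', hu', rfl⟩ := isOpen_induced_iff.1 hu
      obtain ⟨v', hv', rfl⟩ := isOpen_induced_iff.1 hv
      obtain ⟨z, hzS, hzu, hzv⟩ := hS.1.2.2 u' v' hu' hv'
        ⟨a, ha, hau⟩ ⟨b, hb, hbv⟩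
      exact ⟨⟨z, hSF hzS⟩, hzS, hzu, hzv⟩
  · intro T hT hsub
    have h1 : (Subtype.val : F → α) '' T ⊆ F := by
      rintro _ ⟨t, _, rfl⟩; exact t.2
    have h2 : IsIrreducible ((Subtype.val : F → α) '' T) :=
      hT.image _ continuous_subtype_val.continuousOn
    have h3 : S ⊆ (Subtype.val : F → α) '' T := by
      rw [← himg]; exact Set.image_mono hsub
    have h4 := hS.2 ⟨h1, h2⟩ h3
    exact fun t ht => h4 ⟨t, ht, rfl⟩

/-- Purely topological form of Corollary 1.7(a). -/
theorem top_locally_invariant_iff [NoetherianSpace α]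
    (f g : α → β) (hf : Continuous f) (hg : Continuous g) (Z : Set β) (hZ : IsClosed Z)
    (F : Set α) (hF : F = g ⁻¹' Z ∩ f ⁻¹' (Set.univ \ Z)) :
    (∀ x ∈ Z, ∃ U : Set β, IsOpen U ∧ x ∈ U ∧
        f '' ((f ⁻¹' U ∩ g ⁻¹' U) ∩ g ⁻¹' (Z ∩ U)) ⊆ Z ∩ U) ↔
    (⋃ S ∈ {S : Set α | Maximal (fun T : Set α => T ⊆ F ∧ IsIrreducible T) S},
        closure (f '' S) ∩ closure (g '' S)) = ∅ := by
  constructor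
  · intro hloc
    rw [Set.eq_empty_iff_forall_notMem]
    rintro x hx
    simp only [Set.mem_iUnion, Set.mem_inter_iff, Set.mem_setOf_eq] at hx
    obtain ⟨S, hS, hx1, hx2⟩ := hx
    have hSF : S ⊆ F := hS.1.1
    have hxZ : x ∈ Z := by
      refine hZ.closure_subset_iff.2 ?_ hx2
      rintro _ ⟨p, hp, rfl⟩
      exact ((hF ▸ hSF) hp).1
    obtain ⟨U, hU, hxU, hinv⟩ := hloc x hxZ
    have h1 : (S ∩ f ⁻¹' U).Nonempty := by
      obtain ⟨y, hyU, p, hpS, rfl⟩ := mem_closure_iff.1 hx1 U hU hxU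
      exact ⟨p, hpS, hyU⟩
    have h2 : (S ∩ g ⁻¹' U).Nonempty := by
      obtain ⟨y, hyU, p, hpS, rfl⟩ := mem_closure_iff.1 hx2 U hU hxU
      exact ⟨p, hpS, hyU⟩
    obtain ⟨p, hpS, hpU1, hpU2⟩ := hS.1.2.2 (f ⁻¹' U) (g ⁻¹' U)
      (hU.preimage hf) (hU.preimage hg) h1 h2
    have hpF : p ∈ g ⁻¹' Z ∩ f ⁻¹' (Set.univ \ Z) := hF ▸ hSF hpS
    have := hinv ⟨p, ⟨⟨hpU1, hpU2⟩, hpF.1, hpU2⟩, rfl⟩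
    exact hpF.2.2 this.1
  · intro hG x hxZ
    set 𝒮 := {S : Set α | Maximal (fun T : Set α => T ⊆ F ∧ IsIrreducible T) S} with h𝒮
    have hfin : 𝒮.Finite := finite_maximal_irreducible_subsets F
    have hdisj : ∀ S ∈ 𝒮, closure (f '' S) ∩ closure (g '' S) = ∅ := by
      intro S hS
      rw [Set.eq_empty_iff_forall_notMem]
      intro y hy
      have : y ∈ (⋃ S ∈ 𝒮, closure (f '' S) ∩ closure (g '' S)) := by
        exact Set.mem_biUnion hS hy
      rw [hG] at this
      exact this
    classical
    refine ⟨⋂ S ∈ 𝒮, (if x ∈ closure (f '' S) then (closure (g '' S))ᶜ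
      else (closure (f '' S))ᶜ), ?_, ?_, ?_⟩
    · refine Set.Finite.isOpen_biInter hfin ?_
      intro S _
      split_ifs
      · exact isClosed_closure.isOpen_compl
      · exact isClosed_closure.isOpen_compl
    · refine Set.mem_biInter ?_
      intro S hS
      split_ifs with h
      · intro hc
        exact Set.eq_empty_iff_forall_notMem.1 (hdisj S hS) x ⟨h, hc⟩
      · exact h
    · rintro _ ⟨p, ⟨⟨hp1, hp2⟩, hp3, _⟩, rfl⟩
      refine ⟨?_, hp1⟩
      by_contra hfp
      have hpF : p ∈ F := by
        rw [hF]; exact ⟨hp3, trivial, hfp⟩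
      obtain ⟨S, hpS, hSmax⟩ := exists_maximal_irreducible_subset_mem hpF
      have hS : S ∈ 𝒮 := hSmax
      have hfc : f p ∈ closure (f '' S) := subset_closure ⟨p, hpS, rfl⟩
      have hgc : g p ∈ closure (g '' S) := subset_closure ⟨p, hpS, rfl⟩
      have h1 := Set.mem_iInter₂.1 hp1 S hS
      have h2 := Set.mem_iInter₂.1 hp2 S hS
      split_ifs at h1 h2 with h
      · exact h2 hgc
      · exact h1 hfc



/-- A closed subset `Z ⊆ X` is `c`-invariant for a correspondence `c = (c₁, c₂) : C ⟶ X × X`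
if `c₁(c₂⁻¹(Z)) ⊆ Z` set-theoretically. -/
def CorrInvariant {C X : Scheme.{u}} (c₁ c₂ : C ⟶ X) (Z : Set X) : Prop :=
  c₁.base '' (c₂.base ⁻¹' Z) ⊆ Z

/-- `Z ∩ U ⊆ U` is `c|_U`-invariant, where `c|_U : c₁⁻¹(U) ∩ c₂⁻¹(U) → U × U` denotes the
restriction of the correspondence `c = (c₁, c₂)` to an open subset `U ⊆ X`. -/
def CorrRestrictInvariant {C X : Scheme.{u}} (c₁ c₂ : C ⟶ X) (Z U : Set X) : Prop :=
  c₁.base '' ((c₁.base ⁻¹' U ∩ c₂.base ⁻¹' U) ∩ c₂.base ⁻¹' (Z ∩ U)) ⊆ Z ∩ U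

/-- `Z` is locally `c`-invariant: every point of `Z` has an open neighbourhood `U ⊆ X` such
that `Z ∩ U ⊆ U` is `c|_U`-invariant. -/
def CorrLocallyInvariant {C X : Scheme.{u}} (c₁ c₂ : C ⟶ X) (Z : Set X) : Prop :=
  ∀ x ∈ Z, ∃ U : Set X, IsOpen U ∧ x ∈ U ∧ CorrRestrictInvariant c₁ c₂ Z U

/-- `Z ∩ U₀ ⊆ U₀` is locally `c|_{U₀}`-invariant: every point of `Z ∩ U₀` has an open
neighbourhood `U ⊆ U₀` such that `(Z ∩ U₀) ∩ U ⊆ U` is `c|_U`-invariant (the opens of the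
open subscheme `U₀` being exactly the opens of `X` contained in `U₀`). -/
def CorrLocallyInvariantOn {C X : Scheme.{u}} (c₁ c₂ : C ⟶ X) (Z U₀ : Set X) : Prop :=
  ∀ x ∈ Z ∩ U₀, ∃ U : Set X, IsOpen U ∧ U ⊆ U₀ ∧ x ∈ U ∧
    CorrRestrictInvariant c₁ c₂ (Z ∩ U₀) U

/-- `F(c, Z) := c₂⁻¹(Z) ∩ c₁⁻¹(X ∖ Z) ⊆ C`. -/
def corrF {C X : Scheme.{u}} (c₁ c₂ : C ⟶ X) (Z : Set X) : Set C :=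
  c₂.base ⁻¹' Z ∩ c₁.base ⁻¹' (Set.univ \ Z)

/-- `G(c, Z) := ⋃_S cl(c₁(S)) ∩ cl(c₂(S)) ⊆ X`, the union over the irreducible components `S`
of `F(c, Z)` (i.e. the maximal irreducible subsets of `F(c, Z)`). -/
def corrG {C X : Scheme.{u}} (c₁ c₂ : C ⟶ X) (Z : Set X) : Set X :=
  ⋃ S ∈ {S : Set C | Maximal (fun T : Set C => T ⊆ corrF c₁ c₂ Z ∧ IsIrreducible T) S},
    closure (c₁.base '' S) ∩ closure (c₂.base '' S)

/-- **Corollary 1.7(a).**  Let `c : C ⟶ X ×_k X` be a correspondence between schemes of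
finite type over a field `k`.  A closed subset `Z ⊆ X` is locally `c`-invariant if and only if
`G(c, Z) = ∅`. -/
theorem locally_invariant_iff_corrG_empty
    {k : Type u} [Field k]
    (X C : Scheme.{u}) (sX : X ⟶ Spec (CommRingCat.of k)) (sC : C ⟶ Spec (CommRingCat.of k))
    [LocallyOfFiniteType sX] [QuasiCompact sX] [LocallyOfFiniteType sC] [QuasiCompact sC]
    (c : C ⟶ pullback sX sX)
    (Z : Set X) (hZ : IsClosed Z) :
    CorrLocallyInvariant (c ≫ pullback.fst sX sX) (c ≫ pullback.snd sX sX) Z ↔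
      corrG (c ≫ pullback.fst sX sX) (c ≫ pullback.snd sX sX) Z = ∅ := by
  classical
  haveI : CompactSpace C := QuasiCompact.compactSpace_of_compactSpace sC
  haveI : IsNoetherianRing (CommRingCat.of k) := by
    show IsNoetherianRing k; infer_instance
  haveI : IsLocallyNoetherian C := by
    constructor
    intro V
    have e : V.1 ≤ sC ⁻¹ᵁ (⊤ : (Spec (CommRingCat.of k)).Opens) := le_top
    have h := LocallyOfFiniteType.finiteType_of_affine_subset (f := sC)
      (isAffineOpen_top _) V.2 e
    haveI : IsNoetherianRing Γ(Spec (CommRingCat.of k), ⊤) :=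
      IsLocallyNoetherian.component_noetherian ⟨⊤, isAffineOpen_top _⟩
    letI := (sC.appLE ⊤ V e).hom.toAlgebra
    haveI : Algebra.FiniteType Γ(Spec (CommRingCat.of k), ⊤) Γ(C, V) := h
    exact Algebra.FiniteType.isNoetherianRing Γ(Spec (CommRingCat.of k), ⊤) Γ(C, V.1)
  haveI : IsNoetherian C := ⟨⟩
  haveI : NoetherianSpace C := inferInstance
  simp only [CorrLocallyInvariant, CorrRestrictInvariant, corrG, corrF]
  exact top_locally_invariant_iff _ _
    (c ≫ pullback.fst sX sX).base.hom.continuous (c ≫ pullback.snd sX sX).base.hom.continuous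
    Z hZ _ rfl
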